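/- arXiv:1103.1720 — 3 statements merged into one kernel-verified Lean document; each statement's English description precedes it below -/
import Mathlib

section
/- Let L : X → Y be a left-Fredholm operator between Banach spaces with closed splitting Y = R(L) ⊕ Y₂, let (zₙ) be an infinite linearly independent family contained in Y₂, and let K : X → Y be a compact operator. Then the subspace R(L+K) ∩ Y₂ is finite-dimensional; in particular, for any integer p one can choose finitely many indices n₁ < … < n_q with q > p such that the span Z of z_{n₁},…,z_{n_q} satisfies Z ∩ R(L+K) = {0}. -/
open Metric Set Pointwise

set_option maxHeartbeats 800000

/-- Kernel of a compact perturbation of a left-Fredholm operator is finite-dimensional. -/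
lemma aux_fd_ker {X Y : Type*} [NormedAddCommGroup X] [NormedSpace ℝ X] [CompleteSpace X]
    [NormedAddCommGroup Y] [NormedSpace ℝ Y] [CompleteSpace Y]
    (L K' : X →L[ℝ] Y)
    (hker_fin : FiniteDimensional ℝ (LinearMap.ker (L : X →ₗ[ℝ] Y)))
    (hker_compl : (LinearMap.ker (L : X →ₗ[ℝ] Y)).ClosedComplemented)
    (hran_closed : IsClosed (LinearMap.range (L : X →ₗ[ℝ] Y) : Set Y))
    (hK' : IsCompactOperator (⇑K')) :
    FiniteDimensional ℝ (LinearMap.ker ((L + K' : X →L[ℝ] Y) : X →ₗ[ℝ] Y)) := by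
  classical
  obtain ⟨π, hπ⟩ := hker_compl
  have hX₁closed : IsClosed ((LinearMap.ker π.toLinearMap : Submodule ℝ X) : Set X) :=
    ContinuousLinearMap.isClosed_ker π
  haveI : CompleteSpace (LinearMap.ker π.toLinearMap) := hX₁closed.completeSpace_coe
  haveI : CompleteSpace (LinearMap.range (L : X →ₗ[ℝ] Y)) := hran_closed.completeSpace_coe
  -- the "complement" projection
  set Q : X →L[ℝ] X :=
    ContinuousLinearMap.id ℝ X - (LinearMap.ker (L : X →ₗ[ℝ] Y)).subtypeL.comp π with hQdef
  have hQapp : ∀ x : X, Q x = x - (π x : X) := fun x => rfl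
  have hQmem : ∀ x : X, Q x ∈ LinearMap.ker π.toLinearMap := by
    intro x
    have h1 : π ((π x : X)) = π x := hπ (π x)
    have : π (Q x) = 0 := by rw [hQapp, map_sub, h1, sub_self]
    exact this
  -- L restricted to ker π is a bijection onto the (closed) range of L
  set L' : (LinearMap.ker π.toLinearMap) →L[ℝ] (LinearMap.range (L : X →ₗ[ℝ] Y)) :=
    (L.comp (LinearMap.ker π.toLinearMap).subtypeL).codRestrict (LinearMap.range (L : X →ₗ[ℝ] Y))
      (fun x => LinearMap.mem_range_self _ _) with hL'def
  have hL'app : ∀ x : LinearMap.ker π.toLinearMap, (L' x : Y) = L (x : X) := fun x => rfl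
  have hinj : LinearMap.ker L'.toLinearMap = ⊥ := by
    rw [LinearMap.ker_eq_bot']
    intro m hm
    have h1 : L (m : X) = 0 := by
      have := congrArg (Subtype.val) hm
      simpa [hL'app] using this
    have hmN : (m : X) ∈ LinearMap.ker (L : X →ₗ[ℝ] Y) := h1
    have h2 : π (m : X) = ⟨(m : X), hmN⟩ := by simpa using hπ ⟨(m : X), hmN⟩
    have h3 : π (m : X) = 0 := m.2
    have h4 : ((⟨(m : X), hmN⟩ : LinearMap.ker (L : X →ₗ[ℝ] Y)) : X) = ((0 : LinearMap.ker (L : X →ₗ[ℝ] Y)) : X) := by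
      rw [← h2, h3]
    exact Subtype.ext (by simpa using h4)
  have hsurj : LinearMap.range L'.toLinearMap = ⊤ := by
    rw [LinearMap.range_eq_top]
    rintro ⟨y, x, rfl⟩
    refine ⟨⟨Q x, hQmem x⟩, ?_⟩
    apply Subtype.ext
    have hz : L (π x : X) = 0 := (π x).2
    show L (Q x) = L x
    rw [hQapp, map_sub, hz, sub_zero]
  set e : (LinearMap.ker π.toLinearMap) ≃L[ℝ] (LinearMap.range (L : X →ₗ[ℝ] Y)) :=
    ContinuousLinearEquiv.ofBijective L' hinj hsurj with hedef
  have heapp : ∀ x : LinearMap.ker π.toLinearMap, (e x : Y) = L (x : X) := fun x => rfl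
  -- compact set containing K' '' closedBall
  obtain ⟨C, hC, hCsub⟩ :=
    hK'.image_closedBall_subset_compact (f := (K' : X →ₗ[ℝ] Y)) 1
  have hC₂ : IsCompact ((Subtype.val ⁻¹' C : Set (LinearMap.range (L : X →ₗ[ℝ] Y)))) := by
    rw [Subtype.isCompact_iff]
    have himg : Subtype.val '' (Subtype.val ⁻¹' C : Set (LinearMap.range (L : X →ₗ[ℝ] Y)))
        = C ∩ ((LinearMap.range (L : X →ₗ[ℝ] Y) : Submodule ℝ Y) : Set Y) := by
      rw [Set.image_preimage_eq_inter_range, Subtype.range_coe]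
    rw [himg]
    exact hC.inter_right hran_closed
  have hgcont : Continuous (fun w : LinearMap.range (L : X →ₗ[ℝ] Y) => ((e.symm (-w) : LinearMap.ker π.toLinearMap) : X)) :=
    continuous_subtype_val.comp (e.symm.continuous.comp continuous_neg)
  set D : Set X := (fun w : LinearMap.range (L : X →ₗ[ℝ] Y) => ((e.symm (-w) : LinearMap.ker π.toLinearMap) : X)) ''
      (Subtype.val ⁻¹' C : Set (LinearMap.range (L : X →ₗ[ℝ] Y))) with hDdef
  have hDcomp : IsCompact D := hC₂.image hgcont
  obtain ⟨M, hM⟩ := hDcomp.isBounded.subset_closedBall 0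
  set A : Set X := Subtype.val '' (closedBall (0 : LinearMap.ker (L : X →ₗ[ℝ] Y)) (1 + max M 0)) with hAdef
  have hAcomp : IsCompact A := (isCompact_closedBall _ _).image continuous_subtype_val
  set S : Set X := ((LinearMap.ker ((L + K' : X →L[ℝ] Y) : X →ₗ[ℝ] Y) : Submodule ℝ X) : Set X) ∩ closedBall 0 1 with hSdef
  have hkey : ∀ x ∈ S, Q x ∈ D ∧ x - Q x ∈ A := by
    rintro x ⟨hxker, hxball⟩
    have hxk : L x + K' x = 0 := by
      have : (L + K') x = 0 := hxker
      simpa using this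
    have hKx : K' x = -(L x) := eq_neg_of_add_eq_zero_right hxk
    have hKxR : K' x ∈ LinearMap.range (L : X →ₗ[ℝ] Y) := by
      rw [hKx]; exact Submodule.neg_mem _ (LinearMap.mem_range_self _ _)
    have hKxC : K' x ∈ C := hCsub ⟨x, hxball, rfl⟩
    have hQxD : Q x ∈ D := by
      refine ⟨⟨K' x, hKxR⟩, hKxC, ?_⟩
      have he1 : e ⟨Q x, hQmem x⟩ = -(⟨K' x, hKxR⟩ : LinearMap.range (L : X →ₗ[ℝ] Y)) := by
        apply Subtype.ext
        have hz : L (π x : X) = 0 := (π x).2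
        rw [heapp]
        show L (Q x) = -(K' x)
        rw [hQapp, map_sub, hz, hKx, sub_zero, neg_neg]
      show ((e.symm (-(⟨K' x, hKxR⟩ : LinearMap.range (L : X →ₗ[ℝ] Y))) : LinearMap.ker π.toLinearMap) : X) = Q x
      rw [← he1, ContinuousLinearEquiv.symm_apply_apply]
    refine ⟨hQxD, ?_⟩
    have hxQ : x - Q x = ((π x : LinearMap.ker (L : X →ₗ[ℝ] Y)) : X) := by rw [hQapp]; abel
    have hnQ : ‖Q x‖ ≤ M := by
      have := hM hQxD
      rwa [mem_closedBall_zero_iff] at this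
    have hxn : ‖x‖ ≤ 1 := by rwa [mem_closedBall_zero_iff] at hxball
    refine ⟨π x, ?_, hxQ.symm⟩
    rw [mem_closedBall_zero_iff]
    have hcn : ‖(π x : LinearMap.ker (L : X →ₗ[ℝ] Y))‖ = ‖((π x : LinearMap.ker (L : X →ₗ[ℝ] Y)) : X)‖ := rfl
    rw [hcn, ← hxQ]
    calc ‖x - Q x‖ ≤ ‖x‖ + ‖Q x‖ := norm_sub_le _ _
      _ ≤ 1 + max M 0 := add_le_add hxn (le_trans hnQ (le_max_left _ _))
  have hSsub : S ⊆ A + D := by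
    intro x hx
    obtain ⟨h1, h2⟩ := hkey x hx
    exact ⟨x - Q x, h2, Q x, h1, sub_add_cancel x (Q x)⟩
  have hSclosed : IsClosed S :=
    (ContinuousLinearMap.isClosed_ker (L + K')).inter Metric.isClosed_closedBall
  have hScomp : IsCompact S := (hAcomp.add hDcomp).of_isClosed_subset hSclosed hSsub
  have hball : IsCompact (closedBall (0 : LinearMap.ker ((L + K' : X →L[ℝ] Y) : X →ₗ[ℝ] Y)) 1) := by
    rw [Subtype.isCompact_iff]
    have himg : Subtype.val '' (closedBall (0 : LinearMap.ker ((L + K' : X →L[ℝ] Y) : X →ₗ[ℝ] Y)) 1) = S := by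
      ext y
      constructor
      · rintro ⟨⟨y, hy⟩, hn, rfl⟩
        rw [mem_closedBall_zero_iff] at hn
        exact ⟨hy, by rwa [mem_closedBall_zero_iff]⟩
      · rintro ⟨hy, hn⟩
        rw [mem_closedBall_zero_iff] at hn
        exact ⟨⟨y, hy⟩, by rwa [mem_closedBall_zero_iff], rfl⟩
    rw [himg]
    exact hScomp
  exact FiniteDimensional.of_isCompact_closedBall₀ ℝ one_pos hball

/-- Selection of arbitrarily large finite index sets whose span is transverse to `R`. -/
lemma aux_select {Y : Type*} [NormedAddCommGroup Y] [NormedSpace ℝ Y]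
    (R Y₂ : Submodule ℝ Y) (hW : FiniteDimensional ℝ ↥(R ⊓ Y₂))
    (z : ℕ → Y) (hz_indep : LinearIndependent ℝ z) (hzY₂ : ∀ n, z n ∈ Y₂) (k : ℕ) :
    ∃ s : Finset ℕ, s.card = k ∧ Submodule.span ℝ (z '' ↑s) ⊓ R = ⊥ := by
  classical
  induction k with
  | zero => exact ⟨∅, rfl, by simp⟩
  | succ k ih =>
    obtain ⟨s, hcard, hs⟩ := ih
    have hstep : ∃ j ∉ s, Submodule.span ℝ (z '' ↑(insert j s)) ⊓ R = ⊥ := by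
      by_contra hcon
      push_neg at hcon
      haveI : FiniteDimensional ℝ (Submodule.span ℝ (z '' ↑s)) :=
        FiniteDimensional.span_of_finite ℝ ((s : Set ℕ).toFinite.image z)
      set F : Submodule ℝ Y := (R ⊓ Y₂) ⊔ Submodule.span ℝ (z '' ↑s) with hF
      haveI hFfd : FiniteDimensional ℝ F := Submodule.finiteDimensional_sup _ _
      have hzF : ∀ n, z n ∈ F := by
        intro n
        by_cases hn : n ∈ s
        · exact Submodule.mem_sup_right
            (Submodule.subset_span ⟨n, by simpa using hn, rfl⟩)
        · obtain ⟨v, hv, hv0⟩ := (Submodule.ne_bot_iff _).mp (hcon n hn)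
          have hvY₂ : v ∈ Y₂ := by
            have hsub : Submodule.span ℝ (z '' ↑(insert n s)) ≤ Y₂ := by
              rw [Submodule.span_le]
              rintro _ ⟨m, _, rfl⟩
              exact hzY₂ m
            exact hsub hv.1
          have hvW : v ∈ R ⊓ Y₂ := ⟨hv.2, hvY₂⟩
          have hv1 := hv.1
          rw [Finset.coe_insert, Set.image_insert_eq, Submodule.span_insert] at hv1
          obtain ⟨a, ha, u, hu, hvau⟩ := Submodule.mem_sup.mp hv1
          obtain ⟨c, rfl⟩ := Submodule.mem_span_singleton.mp ha
          by_cases hc : c = 0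
          · exfalso
            apply hv0
            have hvu : v = u := by rw [← hvau, hc, zero_smul, zero_add]
            have : v ∈ Submodule.span ℝ (z '' ↑s) ⊓ R := ⟨hvu ▸ hu, hv.2⟩
            rwa [hs, Submodule.mem_bot] at this
          · have hzn : z n = c⁻¹ • v - c⁻¹ • u := by
              rw [← smul_sub, ← hvau]
              rw [add_sub_cancel_right, smul_smul, inv_mul_cancel₀ hc, one_smul]
            rw [hzn]
            exact sub_mem (F.smul_mem _ (Submodule.mem_sup_left hvW))
              (F.smul_mem _ (Submodule.mem_sup_right hu))
      have hindF : LinearIndependent ℝ (fun n : ℕ => (⟨z n, hzF n⟩ : F)) :=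
        LinearIndependent.of_comp F.subtype hz_indep
      haveI := hindF.finite; exact not_finite ℕ
    obtain ⟨j, hj, hjs⟩ := hstep
    exact ⟨insert j s, by rw [Finset.card_insert_of_notMem hj, hcard], hjs⟩

/-- Selection of a large finite-dimensional subspace of a closed complement `Y₂` of the
range of a left-Fredholm operator `L`, transverse to the range of `L + K` for `K` compact. -/
theorem stmt1 {X Y : Type*} [NormedAddCommGroup X] [NormedSpace ℝ X] [CompleteSpace X]
    [NormedAddCommGroup Y] [NormedSpace ℝ Y] [CompleteSpace Y]
    (L K : X →L[ℝ] Y) (Y₂ : Submodule ℝ Y)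
    (hker_fin : FiniteDimensional ℝ (LinearMap.ker (L : X →ₗ[ℝ] Y)))
    (hker_compl : (LinearMap.ker (L : X →ₗ[ℝ] Y)).ClosedComplemented)
    (hran_closed : IsClosed (LinearMap.range (L : X →ₗ[ℝ] Y) : Set Y))
    (hran_compl : (LinearMap.range (L : X →ₗ[ℝ] Y)).ClosedComplemented)
    (hY₂ : IsClosed (Y₂ : Set Y))
    (hcompl : IsCompl (LinearMap.range (L : X →ₗ[ℝ] Y)) Y₂)
    (z : ℕ → Y) (hz_indep : LinearIndependent ℝ z) (hzY₂ : ∀ n, z n ∈ Y₂)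
    (hK : IsCompactOperator (⇑K)) :
    FiniteDimensional ℝ ↥(LinearMap.range ((L + K : X →L[ℝ] Y) : X →ₗ[ℝ] Y) ⊓ Y₂) ∧
      ∀ p : ℕ, ∃ s : Finset ℕ, p < s.card ∧
        Submodule.span ℝ (z '' ↑s) ⊓ LinearMap.range ((L + K : X →L[ℝ] Y) : X →ₗ[ℝ] Y) = ⊥ := by
  classical
  set P₁ : Y →L[ℝ] (LinearMap.range (L : X →ₗ[ℝ] Y)) :=
    (LinearMap.range (L : X →ₗ[ℝ] Y)).linearProjOfClosedCompl Y₂ hcompl hran_closed hY₂ with hP₁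
  set P : Y →L[ℝ] Y := (LinearMap.range (L : X →ₗ[ℝ] Y)).subtypeL.comp P₁ with hP
  have hPleft : ∀ y ∈ LinearMap.range (L : X →ₗ[ℝ] Y), P y = y := by
    intro y hy
    have : P₁ y = ⟨y, hy⟩ := by
      show (LinearMap.range (L : X →ₗ[ℝ] Y)).linearProjOfIsCompl Y₂ hcompl y = ⟨y, hy⟩
      exact Submodule.linearProjOfIsCompl_apply_left hcompl ⟨y, hy⟩
    show (P₁ y : Y) = y
    rw [this]
  have hPright : ∀ y ∈ Y₂, P y = 0 := by
    intro y hy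
    have : P₁ y = 0 := by
      show (LinearMap.range (L : X →ₗ[ℝ] Y)).linearProjOfIsCompl Y₂ hcompl y = 0
      exact Submodule.linearProjOfIsCompl_apply_right hcompl ⟨y, hy⟩
    show (P₁ y : Y) = 0
    rw [this, Submodule.coe_zero]
  have hK' : IsCompactOperator (⇑(P.comp K)) := hK.continuous_comp P.continuous
  have hTfd : FiniteDimensional ℝ (LinearMap.ker ((L + P.comp K : X →L[ℝ] Y) : X →ₗ[ℝ] Y)) :=
    aux_fd_ker L (P.comp K) hker_fin hker_compl hran_closed hK'
  have hle : LinearMap.range ((L + K : X →L[ℝ] Y) : X →ₗ[ℝ] Y) ⊓ Y₂ ≤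
      Submodule.map ((L + K : X →L[ℝ] Y) : X →ₗ[ℝ] Y) (LinearMap.ker ((L + P.comp K : X →L[ℝ] Y) : X →ₗ[ℝ] Y)) := by
    rintro y ⟨hy1, hy2⟩
    obtain ⟨x, rfl⟩ := hy1
    refine ⟨x, ?_, rfl⟩
    have hcalc : (L + P.comp K) x = P ((L + K) x) := by
      simp only [ContinuousLinearMap.add_apply, ContinuousLinearMap.comp_apply, map_add]
      rw [hPleft (L x) (LinearMap.mem_range_self _ _)]
    have : (L + P.comp K) x = 0 := by
      rw [hcalc, hPright ((L + K) x) hy2]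
    exact this
  have hWfd : FiniteDimensional ℝ ↥(LinearMap.range ((L + K : X →L[ℝ] Y) : X →ₗ[ℝ] Y) ⊓ Y₂) := by
    haveI := hTfd
    exact Submodule.finiteDimensional_of_le hle
  refine ⟨hWfd, ?_⟩
  intro p
  obtain ⟨s, hcard, hs⟩ :=
    aux_select (LinearMap.range ((L + K : X →L[ℝ] Y) : X →ₗ[ℝ] Y)) Y₂ hWfd z hz_indep hzY₂ (p + 1)
  exact ⟨s, by omega, hs⟩
end

section
/- Let G be a directed graph on cells {1,…,N} with cell dimensions d₁,…,d_N, and suppose there exists a nonempty set of cells I whose set of direct inputs J satisfies d_J < d_I. Then no admissible vector field f ∈ C_G has a simple equilibrium: for every f ∈ C_G and every x with f(x) = 0, the differential Df(x) : ℝ^d → ℝ^d is not surjective. -/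
/-- In a coupled cell network whose graph admits a set of cells `I` whose set of direct
inputs `J` satisfies `d_J < d_I`, no admissible vector field has a simple equilibrium. -/
theorem stmt5 {N : ℕ} (d : Fin N → ℕ) (arrow : Fin N → Fin N → Prop)
    (I J : Finset (Fin N)) (hIne : I.Nonempty)
    (hJ : ∀ j, j ∈ J ↔ ∃ i ∈ I, arrow j i)
    (hdim : ∑ j ∈ J, d j < ∑ i ∈ I, d i)
    (f : ((i : Fin N) → (Fin (d i) → ℝ)) → ((i : Fin N) → (Fin (d i) → ℝ)))
    (hf : ContDiff ℝ 1 f)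
    (hadm : ∀ x y, ∀ i : Fin N, (∀ j, arrow j i → x j = y j) → f x i = f y i)
    (x : (i : Fin N) → (Fin (d i) → ℝ)) (hx : f x = 0) :
    ¬ Function.Surjective (fderiv ℝ f x) := by
  classical
  intro hsurj
  -- projections onto I- and J-coordinates
  set πI : ((i : Fin N) → (Fin (d i) → ℝ)) →L[ℝ] ((i : I) → (Fin (d i.1) → ℝ)) :=
    ContinuousLinearMap.pi (fun i : I => ContinuousLinearMap.proj i.1) with hπI
  set πJ : ((i : Fin N) → (Fin (d i) → ℝ)) →L[ℝ] ((j : J) → (Fin (d j.1) → ℝ)) :=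
    ContinuousLinearMap.pi (fun j : J => ContinuousLinearMap.proj j.1) with hπJ
  -- extension of J-coordinates to the full space, using x elsewhere
  set extFun : ((j : J) → (Fin (d j.1) → ℝ)) → ((i : Fin N) → (Fin (d i) → ℝ)) :=
    fun u => fun j => if h : j ∈ J then u ⟨j, h⟩ else x j with hext
  have hextdiff : Differentiable ℝ extFun := by
    have : extFun = fun u => (ContinuousLinearMap.pi (fun j : Fin N =>
        if h : j ∈ J then ContinuousLinearMap.proj (⟨j, h⟩ : J) else 0) :
        ((j : J) → (Fin (d j.1) → ℝ)) →L[ℝ] ((i : Fin N) → (Fin (d i) → ℝ))) u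
        + (fun j => if j ∈ J then 0 else x j) := by
      funext u j
      by_cases h : j ∈ J <;>
        simp [hext, h, ContinuousLinearMap.pi_apply]
    rw [this]
    exact (ContinuousLinearMap.differentiable _).add_const _
  set g : ((j : J) → (Fin (d j.1) → ℝ)) → ((i : I) → (Fin (d i.1) → ℝ)) :=
    fun u => πI (f (extFun u)) with hg
  have hgdiff : Differentiable ℝ g :=
    πI.differentiable.comp ((hf.differentiable one_ne_zero).comp hextdiff)
  -- key factorization
  have hkey : (fun y => πI (f y)) = fun y => g (πJ y) := by
    funext y
    funext i
    have : f (extFun (πJ y)) i.1 = f y i.1 := by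
      apply hadm
      intro j hj
      have hjJ : j ∈ J := (hJ j).2 ⟨i.1, i.2, hj⟩
      simp [hext, hπJ, hjJ, ContinuousLinearMap.pi_apply]
    simp [hg, hπI, ContinuousLinearMap.pi_apply, this]
  have hfx : DifferentiableAt ℝ f x := (hf.differentiable one_ne_zero) x
  have h1 : fderiv ℝ (fun y => πI (f y)) x = πI.comp (fderiv ℝ f x) := by
    rw [show (fun y => πI (f y)) = πI ∘ f from rfl,
      fderiv_comp x πI.differentiableAt hfx, πI.fderiv]
  have h2 : fderiv ℝ (fun y => g (πJ y)) x = (fderiv ℝ g (πJ x)).comp πJ := by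
    rw [show (fun y => g (πJ y)) = g ∘ πJ from rfl,
      fderiv_comp x (hgdiff _) πJ.differentiableAt, πJ.fderiv]
  have hcomp : πI.comp (fderiv ℝ f x) = (fderiv ℝ g (πJ x)).comp πJ := by
    rw [← h1, ← h2, hkey]
  -- πI is surjective
  have hπIsurj : Function.Surjective πI := by
    intro v
    refine ⟨fun j => if h : j ∈ I then v ⟨j, h⟩ else 0, ?_⟩
    funext i
    simp [hπI, ContinuousLinearMap.pi_apply, i.2]
  -- so the derivative of g at πJ x is surjective
  have hMsurj : Function.Surjective (fderiv ℝ g (πJ x)) := by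
    intro v
    obtain ⟨w, hw⟩ := hπIsurj v
    obtain ⟨y, hy⟩ := hsurj w
    refine ⟨πJ y, ?_⟩
    have := congrArg (fun T => T y) hcomp
    simp only [ContinuousLinearMap.comp_apply] at this
    rw [← this, hy, hw]
  -- dimension count
  set M : ((j : J) → (Fin (d j.1) → ℝ)) →ₗ[ℝ] ((i : I) → (Fin (d i.1) → ℝ)) :=
    (fderiv ℝ g (πJ x)).toLinearMap with hM
  have hrange : LinearMap.range M = ⊤ := LinearMap.range_eq_top.2 hMsurj
  have hle : Module.finrank ℝ ((i : I) → (Fin (d i.1) → ℝ))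
      ≤ Module.finrank ℝ ((j : J) → (Fin (d j.1) → ℝ)) := by
    have h := LinearMap.finrank_range_le M
    rwa [hrange, finrank_top] at h
  have hEI : Module.finrank ℝ ((i : I) → (Fin (d i.1) → ℝ)) = ∑ i ∈ I, d i := by
    rw [Module.finrank_pi_fintype]
    simp [Module.finrank_pi]
    exact Finset.sum_attach _ d
  have hEJ : Module.finrank ℝ ((j : J) → (Fin (d j.1) → ℝ)) = ∑ j ∈ J, d j := by
    rw [Module.finrank_pi_fintype]
    simp [Module.finrank_pi]
    exact Finset.sum_attach _ d
  rw [hEI, hEJ] at hle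
  omega
end

section
/- If a cell i of the directed graph G has no incoming arrows (no direct inputs) and dᵢ ≥ 1, then no admissible vector field f ∈ C_G has a simple equilibrium point. -/
/-- If a cell `i₀` of the graph has no incoming arrows and dimension at least 1, then no
admissible vector field of the coupled cell network has a simple equilibrium point. -/
theorem stmt6 {N : ℕ} (d : Fin N → ℕ) (arrow : Fin N → Fin N → Prop)
    (i₀ : Fin N) (hno : ∀ j, ¬ arrow j i₀) (hd : 1 ≤ d i₀)
    (f : ((i : Fin N) → (Fin (d i) → ℝ)) → ((i : Fin N) → (Fin (d i) → ℝ)))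
    (hf : ContDiff ℝ 1 f)
    (hadm : ∀ x y, ∀ i : Fin N, (∀ j, arrow j i → x j = y j) → f x i = f y i) :
    ¬ ∃ x : (i : Fin N) → (Fin (d i) → ℝ),
        f x = 0 ∧ Function.Surjective (fderiv ℝ f x) := by
  rintro ⟨x, hx0, hsurj⟩
  -- projection onto coordinate i₀
  set π : ((i : Fin N) → (Fin (d i) → ℝ)) →L[ℝ] (Fin (d i₀) → ℝ) :=
    ContinuousLinearMap.proj i₀ with hπ
  -- π ∘ f is constant
  have hconst : (fun y => f y i₀) = fun _ => f x i₀ := by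
    funext y
    exact hadm y x i₀ (fun j hj => absurd hj (hno j))
  have hdf : HasFDerivAt f (fderiv ℝ f x) x :=
    (hf.differentiable one_ne_zero x).hasFDerivAt
  have hcomp : HasFDerivAt (fun y => f y i₀) (π.comp (fderiv ℝ f x)) x :=
    π.hasFDerivAt.comp x hdf
  have hzero : HasFDerivAt (fun y => f y i₀)
      (0 : ((i : Fin N) → (Fin (d i) → ℝ)) →L[ℝ] (Fin (d i₀) → ℝ)) x := by
    rw [hconst]; exact hasFDerivAt_const _ _
  have heq : π.comp (fderiv ℝ f x) = 0 := hcomp.unique hzero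
  -- build a target vector nonzero in coordinate i₀
  set v : (i : Fin N) → (Fin (d i) → ℝ) :=
    Pi.single i₀ (fun _ => (1 : ℝ)) with hv
  obtain ⟨u, hu⟩ := hsurj v
  have h1 : fderiv ℝ f x u i₀ = 0 :=
    congrFun (congrArg DFunLike.coe heq) u
  have h2 : v i₀ = 0 := by rw [← hu]; exact h1
  have : (1 : ℝ) = 0 := by
    have := congrFun h2 ⟨0, hd⟩
    simpa [hv, Pi.single_eq_same] using this
  norm_num at this
end
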